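/- Let k ≥ 1 and let λ be a partition of m with λ_1 < k whose k-core has at most one part. Let q = ⌊m/k⌋ and let core_k(λ) = λ⁰ ⊂ λ¹ ⊂ ... ⊂ λ^q = λ be any sequence of partitions such that each λ^j/λ^{j-1} is a rim hook of size k. Then pet_k(λ) = Π_{j=1}^q (-1)^{ht(λ^j/λ^{j-1})+1}, with the empty product equal to 1 when λ = core_k(λ). -/

import Mathlib

open scoped Classical

namespace Petrie

/-- An integer partition, encoded as a weakly decreasing, eventually zero
function `ℕ → ℕ` (0-indexed parts: `parts i` is the `(i+1)`-st part). -/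
structure Partition where
  parts : ℕ → ℕ
  antitone : ∀ ⦃i j : ℕ⦄, i ≤ j → parts j ≤ parts i
  fin_supp : ∃ N, ∀ i, N ≤ i → parts i = 0

/-- The size `|λ|` of a partition. -/
noncomputable def psize (l : Partition) : ℕ := ∑ᶠ i, l.parts i

/-- The number of (nonzero) parts of a partition. -/
noncomputable def length (l : Partition) : ℕ := sInf {i | l.parts i = 0}

/-- The partition whose parts are given by a weakly decreasing list `L`
(of its nonzero entries, possibly padded by zeros). -/
noncomputable def ofList (L : List ℕ) : Partition where
  parts := fun i => (L.drop i).foldr max 0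
  antitone := by
    have step : ∀ (M : List ℕ) (i : ℕ),
        (M.drop (i+1)).foldr max 0 ≤ (M.drop i).foldr max 0 := by
      intro M
      induction M with
      | nil => intro i; simp
      | cons a t ih =>
        intro i
        cases i with
        | zero =>
          simp only [List.drop_succ_cons, List.drop_zero, List.foldr_cons]; exact le_max_right a (t.foldr max 0)
        | succ n => simpa using ih n
    intro i j hij
    induction j, hij using Nat.le_induction with
    | base => exact le_rfl
    | succ n hn ih => exact (step L n).trans ih
  fin_supp := ⟨L.length, by intro i hi; simp [List.drop_eq_nil_of_le hi]⟩

/-- The conjugate (transpose) partition. -/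
noncomputable def conj (l : Partition) : Partition where
  parts := fun i => sInf {n | l.parts n ≤ i}
  antitone := by
    intro i j hij
    obtain ⟨N, hN⟩ := l.fin_supp
    refine csInf_le_csInf (OrderBot.bddBelow _) ⟨N, ?_⟩ ?_
    · simp [hN N le_rfl]
    · intro n hn
      exact le_trans hn hij
  fin_supp := by
    refine ⟨l.parts 0, fun i hi => ?_⟩
    exact Nat.sInf_eq_zero.mpr (Or.inl (le_trans (l.antitone (Nat.zero_le 0)) hi))

/-- The `k`-Petrie number `pet_k(λ) = det[χ(0 ≤ λ_i - i + j < k)]_{i,j=1}^{ℓ(λ)}`. -/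
noncomputable def pet (k : ℕ) (l : Partition) : ℤ :=
  Matrix.det (Matrix.of fun i j : Fin (length l) =>
    if (0:ℤ) ≤ (l.parts i : ℤ) - (i:ℕ) + (j:ℕ) ∧ (l.parts i : ℤ) - (i:ℕ) + (j:ℕ) < k
    then 1 else 0)

/-- The cells of the skew diagram `λ/μ` (rows and columns 0-indexed). -/
def cells (la mu : Partition) : Set (ℕ × ℕ) :=
  {c | mu.parts c.1 ≤ c.2 ∧ c.2 < la.parts c.1}

/-- Rookwise adjacency of two cells. -/
def Adj (c d : ℕ × ℕ) : Prop :=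
  (c.1 = d.1 ∧ (c.2 + 1 = d.2 ∨ d.2 + 1 = c.2)) ∨
  (c.2 = d.2 ∧ (c.1 + 1 = d.1 ∨ d.1 + 1 = c.1))

/-- `λ/μ` is a rim hook (border strip) of size `k`: `μ ⊆ λ`, the skew diagram
has `k` cells, is rookwise connected, and contains no 2×2 square. -/
def IsRimHook (la mu : Partition) (k : ℕ) : Prop :=
  (∀ i, mu.parts i ≤ la.parts i) ∧
  (∑ᶠ i, (la.parts i - mu.parts i)) = k ∧
  (∀ c ∈ cells la mu, ∀ d ∈ cells la mu,
    Relation.ReflTransGen (fun a b => a ∈ cells la mu ∧ b ∈ cells la mu ∧ Adj a b) c d) ∧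
  ¬ ∃ i j : ℕ, (i, j) ∈ cells la mu ∧ (i+1, j) ∈ cells la mu ∧
      (i, j+1) ∈ cells la mu ∧ (i+1, j+1) ∈ cells la mu

/-- The height of a skew shape `λ/μ`: one less than its number of rows. -/
noncomputable def height (la mu : Partition) : ℕ :=
  Set.ncard {i | mu.parts i < la.parts i} - 1

/-- The number of columns of the skew diagram `λ/μ`. -/
noncomputable def cols (la mu : Partition) : ℕ :=
  Set.ncard {j | ∃ i, (i, j) ∈ cells la mu}

/-- `c` is the `k`-core of `λ`: it is obtained from `λ` by successively removing
rim hooks of size `k`, and no further rim hook of size `k` can be removed. -/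
def IsCore (k : ℕ) (la c : Partition) : Prop :=
  Relation.ReflTransGen (fun a b => IsRimHook a b k) la c ∧ ∀ b, ¬ IsRimHook c b k

/-- Dominance order: `Dominates μ λ` means `λ ⊴ μ`. -/
def Dominates (mu la : Partition) : Prop :=
  ∀ r, ∑ i ∈ Finset.range r, la.parts i ≤ ∑ i ∈ Finset.range r, mu.parts i

/-! ### Symmetric functions, realized as formal power series in countably
many variables `x_0, x_1, x_2, …`. -/

/-- The ring of formal power series in the variables `x_i`, `i : ℕ`. -/
abbrev SymFn := MvPowerSeries ℕ ℤ

/-- The total degree of an exponent vector. -/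
noncomputable def degree (d : ℕ →₀ ℕ) : ℕ := d.sum fun _ e => e

/-- The complete homogeneous symmetric function `h_m`. -/
noncomputable def hfun (m : ℕ) : SymFn := fun d => if degree d = m then 1 else 0

/-- `h_n` for an integer index (`0` for negative `n`). -/
noncomputable def hz (n : ℤ) : SymFn := if 0 ≤ n then hfun n.toNat else 0

/-- The elementary symmetric function `e_m`. -/
noncomputable def esymmF (m : ℕ) : SymFn :=
  fun d => if degree d = m ∧ ∀ i, d i ≤ 1 then 1 else 0

/-- The power sum symmetric function `p_n = Σ_i x_i^n`. -/
noncomputable def psumF (n : ℕ) : SymFn :=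
  fun d => if ∃ i, d = Finsupp.single i n then 1 else 0

/-- The Petrie symmetric function `G(k,m)`, i.e. the degree-`m` part of
`Π_i (1 + x_i + x_i^2 + ⋯ + x_i^{k-1})`. -/
noncomputable def G (k m : ℕ) : SymFn :=
  fun d => if degree d = m ∧ ∀ i, d i < k then 1 else 0

/-- The monomial symmetric function `m_λ`. -/
noncomputable def msym (l : Partition) : SymFn :=
  fun d => if Multiset.map (fun i => d i) d.support.val =
      Multiset.map l.parts (Multiset.range (length l)) then 1 else 0

/-- The Schur function `s_λ`, via the Jacobi–Trudi determinant
`s_λ = det[h_{λ_i - i + j}]_{i,j=1}^{ℓ(λ)}`. -/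
noncomputable def schur (l : Partition) : SymFn :=
  Matrix.det (Matrix.of fun i j : Fin (length l) =>
    hz ((l.parts i : ℤ) - (i:ℕ) + (j:ℕ)))

/-- The representative in `{1, …, k}` of `x` modulo `k`. -/
noncomputable def resid (k : ℕ) (x : ℤ) : ℤ := if x % (k:ℤ) = 0 then (k:ℤ) else x % (k:ℤ)

/-- `β_i = λᶜ_i - i` (1-indexed `i`). -/
noncomputable def betaSeq (l : Partition) (i : ℕ) : ℤ := ((conj l).parts (i-1) : ℤ) - (i:ℤ)

/-- `γ_i ∈ {1, …, k}`, `γ_i ≡ λᶜ_i - i (mod k)` (1-indexed `i`). -/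
noncomputable def gammaSeq (k : ℕ) (l : Partition) (i : ℕ) : ℤ := resid k (betaSeq l i)

/-- The number of non-inversions of the sequence `γ_1, …, γ_{k-1}`. -/
noncomputable def ninv (k : ℕ) (g : ℕ → ℤ) : ℕ :=
  (((Finset.Icc 1 (k-1)) ×ˢ (Finset.Icc 1 (k-1))).filter
    (fun p => p.1 < p.2 ∧ g p.1 < g p.2)).card

section Proofs
-- basics
lemma parts_length_eq_zero (l : Partition) : l.parts (length l) = 0 := by
  obtain ⟨N, hN⟩ := l.fin_supp
  have hne : {i | l.parts i = 0}.Nonempty := ⟨N, hN N le_rfl⟩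
  exact Nat.sInf_mem hne

lemma parts_eq_zero_of_length_le (l : Partition) {i : ℕ} (h : length l ≤ i) :
    l.parts i = 0 := by
  have h1 := l.antitone h
  have h2 := parts_length_eq_zero l
  omega

lemma lt_length_of_parts_ne_zero (l : Partition) {i : ℕ} (h : l.parts i ≠ 0) :
    i < length l := by
  by_contra hc
  exact h (parts_eq_zero_of_length_le l (by omega))

def bseq (l : Partition) (i : ℕ) : ℤ := (l.parts i : ℤ) - i

lemma bseq_strictAnti (l : Partition) {i j : ℕ} (h : i < j) : bseq l j < bseq l i := by
  have := l.antitone h.le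
  unfold bseq; push_cast; omega

noncomputable def MAs (k : ℕ) (s : ℕ → ℤ) (N : ℕ) : Matrix (Fin N) (Fin N) ℤ :=
  Matrix.of fun i j => if (0:ℤ) ≤ s i + (j:ℕ) ∧ s i + (j:ℕ) < k then 1 else 0

lemma pet_eq_det (k : ℕ) (l : Partition) :
    pet k l = (MAs k (bseq l) (length l)).det := by
  unfold pet MAs bseq
  rfl

lemma det_MAs_succ (k : ℕ) (hk : 1 ≤ k) (l : Partition) {N : ℕ} (h : length l ≤ N) :
    (MAs k (bseq l) (N+1)).det = (MAs k (bseq l) N).det := by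
  rw [Matrix.det_succ_row (MAs k (bseq l) (N+1)) (Fin.last N)]
  have hz : l.parts N = 0 := parts_eq_zero_of_length_le l h
  rw [Finset.sum_eq_single (Fin.last N)]
  · have h1 : (MAs k (bseq l) (N+1)) (Fin.last N) (Fin.last N) = 1 := by
      simp only [MAs, Matrix.of_apply, bseq, Fin.val_last, hz]
      rw [if_pos]; constructor <;> push_cast <;> omega
    rw [h1, Fin.succAbove_last]
    have h2 : ((MAs k (bseq l) (N+1)).submatrix Fin.castSucc Fin.castSucc)
        = MAs k (bseq l) N := by
      ext i j
      simp [MAs, Matrix.submatrix_apply]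
    rw [h2]
    have : (-1 : ℤ) ^ ((Fin.last N : ℕ) + (Fin.last N : ℕ)) = 1 := by
      rw [Fin.val_last]
      exact Even.neg_one_pow ⟨N, by ring⟩
    rw [this]; ring
  · intro j _ hj
    have hjv : (j : ℕ) < N := by
      have := j.isLt
      rcases Nat.lt_or_ge (j : ℕ) N with h' | h'
      · exact h'
      · exfalso; exact hj (by ext; simp [Fin.val_last]; omega)
    have h0 : (MAs k (bseq l) (N+1)) (Fin.last N) j = 0 := by
      simp only [MAs, Matrix.of_apply, bseq, Fin.val_last, hz]
      rw [if_neg]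
      push_cast
      omega
    rw [h0]; ring
  · intro h'; exact absurd (Finset.mem_univ _) h'

lemma det_MAs_eq_pet (k : ℕ) (hk : 1 ≤ k) (l : Partition) {N : ℕ} (h : length l ≤ N) :
    (MAs k (bseq l) N).det = pet k l := by
  induction N, h using Nat.le_induction with
  | base => exact (pet_eq_det k l).symm
  | succ N hN ih => rw [det_MAs_succ k hk l hN, ih]


noncomputable def dRow (k : ℕ) (x : ℤ) (j : ℕ) : ℤ :=
  if x < 0 then (if (j:ℤ) = -x then 1 else 0)
  else (if (k:ℤ) ∣ (j:ℤ) then 1 else 0) - (if ((k:ℤ) ∣ ((j:ℤ) + x) ∧ 1 ≤ j) then 1 else 0)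

noncomputable def Dmat (k : ℕ) (s : ℕ → ℤ) (N : ℕ) : Matrix (Fin N) (Fin N) ℤ :=
  Matrix.of fun i j => dRow k (s i) (j:ℕ)

noncomputable def pent (k : ℕ) (x : ℤ) (j : ℕ) : ℤ :=
  if 0 ≤ x then (if (j:ℤ) % k + x < k then 1 else 0) else (if 0 ≤ x + j then 1 else 0)

noncomputable def Pmat (k : ℕ) (s : ℕ → ℤ) (N : ℕ) : Matrix (Fin N) (Fin N) ℤ :=
  Matrix.of fun i j => pent k (s i) (j:ℕ)

noncomputable def Umat (k N : ℕ) : Matrix (Fin N) (Fin N) ℤ :=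
  Matrix.of fun a b => if ((a:ℕ) ≤ (b:ℕ) ∧ (k:ℤ) ∣ (((b:ℕ):ℤ) - ((a:ℕ):ℤ))) then 1 else 0

noncomputable def Vmat (N : ℕ) : Matrix (Fin N) (Fin N) ℤ :=
  Matrix.of fun a b => (if a = b then (1:ℤ) else 0) + (if (a:ℕ)+1 = (b:ℕ) then -1 else 0)


lemma MAs_mul_U (k : ℕ) (hk : 1 ≤ k) (s : ℕ → ℤ) (N : ℕ) (hs : ∀ i, i < N → s i < k) :
    MAs k s N * Umat k N = Pmat k s N := by
  ext i j
  rw [Matrix.mul_apply]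
  simp only [MAs, Umat, Pmat, pent, Matrix.of_apply]
  have hxk : s i < k := hs i i.isLt
  set x := s i with hx
  have hkpos : (0:ℤ) < k := by exact_mod_cast hk
  -- summand as single if
  have hterm : ∀ c : Fin N,
      (if (0:ℤ) ≤ x + (c:ℕ) ∧ x + (c:ℕ) < k then (1:ℤ) else 0) *
        (if ((c:ℕ) ≤ (j:ℕ) ∧ (k:ℤ) ∣ (((j:ℕ):ℤ) - ((c:ℕ):ℤ))) then 1 else 0)
      = if ((0:ℤ) ≤ x + (c:ℕ) ∧ x + (c:ℕ) < k ∧ (c:ℕ) ≤ (j:ℕ) ∧ (k:ℤ) ∣ (((j:ℕ):ℤ) - ((c:ℕ):ℤ))) then 1 else 0 := by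
    intro c
    rw [ite_zero_mul_ite_zero, mul_one]
    exact if_congr and_assoc rfl rfl
  simp_rw [hterm]
  -- uniqueness of a valid c
  have huniq : ∀ c1 c2 : ℕ,
      ((0:ℤ) ≤ x + c1 ∧ x + c1 < k ∧ (k:ℤ) ∣ (((j:ℕ):ℤ) - c1)) →
      ((0:ℤ) ≤ x + c2 ∧ x + c2 < k ∧ (k:ℤ) ∣ (((j:ℕ):ℤ) - c2)) → c1 = c2 := by
    intro c1 c2 h1 h2
    have hdvd : (k:ℤ) ∣ ((c1:ℤ) - c2) := by
      have := Int.dvd_sub h2.2.2 h1.2.2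
      simpa using this
    have : ((c1:ℤ) - c2) = 0 := by
      apply Int.eq_zero_of_abs_lt_dvd hdvd
      rw [abs_lt]
      constructor <;> [linarith [h1.1, h2.2.1] ; linarith [h2.1, h1.2.1]]
    omega
  by_cases h0 : 0 ≤ x
  · by_cases h1 : ((j:ℕ):ℤ) % k + x < k
    · -- witness j % k
      have hjk : (j:ℕ) % k < N := lt_of_le_of_lt (Nat.mod_le _ _) j.isLt
      have hmodcast : (((j:ℕ) % k : ℕ) : ℤ) = ((j:ℕ):ℤ) % (k:ℤ) := by
        push_cast
        rfl
      rw [Finset.sum_eq_single (⟨(j:ℕ) % k, hjk⟩ : Fin N)]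
      · rw [if_pos, if_pos h0, if_pos h1]
        refine ⟨?_, ?_, Nat.mod_le _ _, ?_⟩
        · have := Int.emod_nonneg ((j:ℕ):ℤ) (by omega : (k:ℤ) ≠ 0)
          simp only [hmodcast]; omega
        · simp only [hmodcast]; omega
        · simp only [hmodcast]
          exact Int.dvd_self_sub_of_emod_eq rfl
      · intro c _ hc
        rw [if_neg]
        rintro ⟨ha, hb, hcj, hdvd⟩
        apply hc
        apply Fin.ext
        exact huniq _ _ ⟨ha, hb, hdvd⟩
          ⟨by simp only [hmodcast]; have := Int.emod_nonneg ((j:ℕ):ℤ) (by omega : (k:ℤ) ≠ 0); omega,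
           by simp only [hmodcast]; omega,
           by simp only [hmodcast]; exact Int.dvd_self_sub_of_emod_eq rfl⟩
      · intro h; exact absurd (Finset.mem_univ _) h
    · -- sum = 0
      rw [if_pos h0, if_neg h1]
      apply Finset.sum_eq_zero
      intro c _
      rw [if_neg]
      rintro ⟨ha, hb, hcj, hdvd⟩
      -- c ≡ j mod k and 0 ≤ x + c < k forces (j%k) + x < k
      apply h1
      have hck : (c:ℕ) < k := by omega
      have : ((j:ℕ):ℤ) % k = ((c:ℕ):ℤ) := by
        obtain ⟨t, ht⟩ := hdvd
        have : ((j:ℕ):ℤ) = (c:ℕ) + k * t := by linarith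
        rw [this, Int.add_mul_emod_self_left]
        exact Int.emod_eq_of_lt (by positivity) (by exact_mod_cast hck)
      omega
  · by_cases h1 : (0:ℤ) ≤ x + (j:ℕ)
    · -- witness c0 with (c0:ℤ) = (x+j) % k - x
      have he0 : (0:ℤ) ≤ (x + (j:ℕ)) % k := Int.emod_nonneg _ (by omega)
      have he1 : (x + (j:ℕ)) % k < k := Int.emod_lt_of_pos _ hkpos
      have hele : (x + (j:ℕ)) % k ≤ x + (j:ℕ) := by
        have hd : (0:ℤ) ≤ (x + (j:ℕ)) / k := Int.ediv_nonneg h1 (by omega)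
        have := Int.emod_def (x + ((j:ℕ):ℤ)) k
        nlinarith
      set e : ℤ := (x + (j:ℕ)) % k with hedef
      have hc0 : 0 ≤ e - x := by omega
      set c0 : ℕ := (e - x).toNat with hc0def
      have hc0z : (c0:ℤ) = e - x := Int.toNat_of_nonneg hc0
      have hc0le : c0 ≤ (j:ℕ) := by omega
      have hc0N : c0 < N := lt_of_le_of_lt hc0le j.isLt
      have hdvd0 : (k:ℤ) ∣ (((j:ℕ):ℤ) - c0) := by
        rw [hc0z]
        have : ((j:ℕ):ℤ) - (e - x) = (x + (j:ℕ)) - e := by ring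
        rw [this, hedef]
        exact Int.dvd_self_sub_of_emod_eq rfl
      rw [Finset.sum_eq_single (⟨c0, hc0N⟩ : Fin N)]
      · rw [if_pos, if_neg h0, if_pos h1]
        exact ⟨by rw [hc0z]; omega, by rw [hc0z]; omega, hc0le, hdvd0⟩
      · intro c _ hc
        rw [if_neg]
        rintro ⟨ha, hb, hcj, hdvd⟩
        exact hc (Fin.ext (huniq _ _ ⟨ha, hb, hdvd⟩
          ⟨by rw [hc0z]; omega, by rw [hc0z]; omega, hdvd0⟩))
      · intro h; exact absurd (Finset.mem_univ _) h
    · rw [if_neg h0, if_neg h1]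
      apply Finset.sum_eq_zero
      intro c _
      rw [if_neg]
      rintro ⟨ha, hb, hcj, hdvd⟩
      have : (0:ℤ) ≤ x + (j:ℕ) := by
        have : ((c:ℕ):ℤ) ≤ ((j:ℕ):ℤ) := by exact_mod_cast hcj
        omega
      exact h1 this


lemma dvd_cases01 {k v : ℤ} (hk : 0 < k) (h : k ∣ v) (hl : -k < v) (hu : v < 2*k) :
    v = 0 ∨ v = k := by
  obtain ⟨t, rfl⟩ := h
  have ht0 : -1 < t := by by_contra hc; push_neg at hc; nlinarith
  have ht1 : t < 2 := by by_contra hc; push_neg at hc; nlinarith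
  interval_cases t
  · left; ring
  · right; ring

lemma pent_zero (k : ℕ) (hk : 1 ≤ k) (x : ℤ) (hx : x < k) : pent k x 0 = dRow k x 0 := by
  unfold pent dRow
  have hkpos : (0:ℤ) < k := by exact_mod_cast hk
  simp only [Nat.cast_zero, Int.zero_emod, zero_add, dvd_zero, if_true]
  have h2 : (if ((k:ℤ) ∣ x ∧ 1 ≤ (0:ℕ)) then (1:ℤ) else 0) = 0 :=
    if_neg (by rintro ⟨-, h2⟩; omega)
  rw [h2]
  split_ifs <;> omega

lemma pent_diff (k : ℕ) (hk : 1 ≤ k) (x : ℤ) (hx : x < k) (j : ℕ) (hj : 1 ≤ j) :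
    pent k x j - pent k x (j-1) = dRow k x j := by
  unfold pent dRow
  have hkpos : (0:ℤ) < k := by exact_mod_cast hk
  have hcast : ((j-1 : ℕ) : ℤ) = (j:ℤ) - 1 := by omega
  rw [hcast]
  by_cases h : x < 0
  · rw [if_neg (by omega : ¬ (0:ℤ) ≤ x), if_neg (by omega : ¬ (0:ℤ) ≤ x), if_pos h]
    split_ifs <;> omega
  · rw [if_pos (by omega : (0:ℤ) ≤ x), if_pos (by omega : (0:ℤ) ≤ x), if_neg h]
    set jm := (j:ℤ) % k with hjm
    set jm' := ((j:ℤ) - 1) % k with hjm'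
    have hb1 : 0 ≤ jm := Int.emod_nonneg _ (by omega)
    have hb2 : jm < k := Int.emod_lt_of_pos _ hkpos
    have hb3 : 0 ≤ jm' := Int.emod_nonneg _ (by omega)
    have hb4 : jm' < k := Int.emod_lt_of_pos _ hkpos
    have hd1 : (k:ℤ) ∣ ((j:ℤ) - jm) := Int.dvd_self_sub_of_emod_eq rfl
    have hd2 : (k:ℤ) ∣ (((j:ℤ)-1) - jm') := Int.dvd_self_sub_of_emod_eq rfl
    have hrel : jm' - jm + 1 = 0 ∨ jm' - jm + 1 = k := by
      apply dvd_cases01 hkpos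
      · have h1 := dvd_sub hd1 hd2
        have h2 : ((j:ℤ) - jm) - (((j:ℤ)-1) - jm') = jm' - jm + 1 := by ring
        rwa [h2] at h1
      · omega
      · omega
    have hP1 : ((k:ℤ) ∣ (j:ℤ)) ↔ jm = 0 := by
      rw [Int.dvd_iff_emod_eq_zero, ← hjm]
    have hP2 : ((k:ℤ) ∣ ((j:ℤ) + x)) ↔ (jm + x = 0 ∨ jm + x = k) := by
      constructor
      · intro hdd
        apply dvd_cases01 hkpos
        · have h1 := dvd_sub hdd hd1
          have h2 : ((j:ℤ) + x) - ((j:ℤ) - jm) = jm + x := by ring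
          rwa [h2] at h1
        · omega
        · omega
      · intro hor
        have h1 : (k:ℤ) ∣ (jm + x) := by rcases hor with h'|h' <;> simp [h']
        have h2 : (j:ℤ) + x = ((j:ℤ) - jm) + (jm + x) := by ring
        rw [h2]
        exact dvd_add hd1 h1
    simp only [hP1, hP2]
    have hjj : (1:ℕ) ≤ j := hj
    rcases hrel with h5 | h5 <;> split_ifs <;> first | rfl | omega | (exfalso; omega)


lemma Pmat_mul_V (k : ℕ) (hk : 1 ≤ k) (s : ℕ → ℤ) (N : ℕ) (hs : ∀ i, i < N → s i < k) :
    Pmat k s N * Vmat N = Dmat k s N := by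
  ext i j
  rw [Matrix.mul_apply]
  simp only [Pmat, Vmat, Dmat, Matrix.of_apply]
  have hxk : s i < k := hs i i.isLt
  set x := s i with hx
  have hsplit : ∀ c : Fin N,
      pent k x (c:ℕ) * ((if c = j then (1:ℤ) else 0) + (if (c:ℕ)+1 = (j:ℕ) then -1 else 0))
      = pent k x (c:ℕ) * (if c = j then (1:ℤ) else 0)
        + pent k x (c:ℕ) * (if (c:ℕ)+1 = (j:ℕ) then -1 else 0) := fun c => by ring
  simp_rw [hsplit]
  rw [Finset.sum_add_distrib]
  have hA : (∑ c : Fin N, pent k x (c:ℕ) * (if c = j then (1:ℤ) else 0)) = pent k x (j:ℕ) := by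
    rw [Finset.sum_eq_single j]
    · rw [if_pos rfl, mul_one]
    · intro c _ hc; rw [if_neg hc, mul_zero]
    · intro h; exact absurd (Finset.mem_univ _) h
  rw [hA]
  rcases Nat.eq_zero_or_pos (j:ℕ) with hj0 | hjpos
  · have hB : (∑ c : Fin N, pent k x (c:ℕ) * (if (c:ℕ)+1 = (j:ℕ) then (-1:ℤ) else 0)) = 0 := by
      apply Finset.sum_eq_zero
      intro c _
      rw [if_neg (by omega), mul_zero]
    rw [hB, add_zero, hj0]
    exact pent_zero k hk x hxk
  · have hjN : (j:ℕ) - 1 < N := by have := j.isLt; omega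
    have hB : (∑ c : Fin N, pent k x (c:ℕ) * (if (c:ℕ)+1 = (j:ℕ) then (-1:ℤ) else 0))
        = - pent k x ((j:ℕ)-1) := by
      rw [Finset.sum_eq_single (⟨(j:ℕ)-1, hjN⟩ : Fin N)]
      · rw [if_pos (by simp; omega)]; ring
      · intro c _ hc
        rw [if_neg, mul_zero]
        intro hcc
        exact hc (Fin.ext (by simp; omega))
      · intro h; exact absurd (Finset.mem_univ _) h
    rw [hB]
    have := pent_diff k hk x hxk (j:ℕ) hjpos
    linarith

lemma det_Umat (k N : ℕ) : (Umat k N).det = 1 := by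
  have h : (Umat k N).BlockTriangular id := by
    intro a b hba
    simp only [id_eq] at hba
    simp only [Umat, Matrix.of_apply]
    rw [if_neg]
    rintro ⟨h1, -⟩
    exact absurd (Fin.lt_iff_val_lt_val.mp hba) (not_lt.mpr h1)
  rw [Matrix.det_of_upperTriangular h]
  apply Finset.prod_eq_one
  intro a _
  simp [Umat]

lemma det_Vmat (N : ℕ) : (Vmat N).det = 1 := by
  have h : (Vmat N).BlockTriangular id := by
    intro a b hba
    simp only [id_eq] at hba
    have hv := Fin.lt_iff_val_lt_val.mp hba
    simp only [Vmat, Matrix.of_apply]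
    rw [if_neg (by intro h; exact absurd (Fin.val_eq_of_eq h) (by omega)), if_neg (by omega)]
    ring
  rw [Matrix.det_of_upperTriangular h]
  apply Finset.prod_eq_one
  intro a _
  simp [Vmat]

/-- swapping adjacent parameters flips the sign -/
lemma det_Dmat_swap (k : ℕ) (s s' : ℕ → ℤ) (N p : ℕ) (hp : p + 1 < N)
    (h1 : s' p = s (p+1)) (h2 : s' (p+1) = s p)
    (h3 : ∀ i, i ≠ p → i ≠ p+1 → s' i = s i) :
    (Dmat k s' N).det = - (Dmat k s N).det := by
  have hpN : p < N := by omega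
  set a : Fin N := ⟨p, hpN⟩
  set b : Fin N := ⟨p+1, hp⟩
  have hab : a ≠ b := by simp [a, b, Fin.ext_iff]
  have heq : Dmat k s' N = (Dmat k s N).submatrix (Equiv.swap a b) id := by
    ext i j
    simp only [Dmat, Matrix.of_apply, Matrix.submatrix_apply, id_eq]
    rcases eq_or_ne i a with rfl | hia
    · rw [Equiv.swap_apply_left]
      simp only [a, b]
      rw [h1]
    · rcases eq_or_ne i b with rfl | hib
      · rw [Equiv.swap_apply_right]
        simp only [a, b]
        rw [h2]
      · rw [Equiv.swap_apply_of_ne_of_ne hia hib]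
        rw [h3 i (by simp [a, Fin.ext_iff] at hia ⊢; omega) (by simp [b, Fin.ext_iff] at hib ⊢; omega)]
  rw [heq]
  have := Matrix.det_permute (Equiv.swap a b) (Dmat k s N)
  rw [Equiv.Perm.sign_swap hab] at this
  have h4 : ((Matrix.submatrix (Dmat k s N) (⇑(Equiv.swap a b)) id)) = fun i => (Dmat k s N) ((Equiv.swap a b) i) := rfl
  rw [show ((-1 : ℤˣ) : ℤ) = -1 from rfl] at this
  simpa using this


lemma dRow_neg {k : ℕ} {x : ℤ} (j : ℕ) (hx : x < 0) :
    dRow k x j = if (j:ℤ) = -x then 1 else 0 := by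
  unfold dRow; rw [if_pos hx]

lemma dRow_nonneg {k : ℕ} {x : ℤ} (j : ℕ) (hx : 0 ≤ x) :
    dRow k x j = (if (k:ℤ) ∣ (j:ℤ) then 1 else 0)
      - (if ((k:ℤ) ∣ ((j:ℤ) + x) ∧ 1 ≤ j) then 1 else 0) := by
  unfold dRow; rw [if_neg (by omega)]

/-- the core cancellation: replacing parameter x = s r by x - k flips the sign -/
lemma det_Dmat_update (k : ℕ) (hk : 1 ≤ k) (s : ℕ → ℤ) (N r : ℕ) (hr : r < N)
    (hsk : ∀ i, i < N → s i < k)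
    (huniq : ∀ i, i < N → s i = s r → i = r)
    (hne : ∀ i, i < N → s i ≠ s r - k)
    (hj2N : (k - s r).toNat < N) :
    (Dmat k (Function.update s r (s r - k)) N).det = - (Dmat k s N).det := by
  have hkpos : (0:ℤ) < k := by exact_mod_cast hk
  set x := s r with hxdef
  have hxk : x < k := hsk r hr
  set rhat : Fin N := ⟨r, hr⟩ with hrhat
  set C : Matrix (Fin N) (Fin N) ℤ :=
    (Dmat k s N).updateRow rhat (fun j => dRow k x (j:ℕ) + dRow k (x-k) (j:ℕ)) with hC
  have hCe : ∀ (i jj : Fin N), C i jj =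
      if (i:ℕ) = r then dRow k x (jj:ℕ) + dRow k (x-k) (jj:ℕ) else dRow k (s i) (jj:ℕ) := by
    intro i jj
    rw [hC, Matrix.updateRow_apply]
    rcases eq_or_ne i rhat with rfl | hir
    · rw [if_pos rfl, if_pos rfl]
    · rw [if_neg hir, if_neg (by simp [hrhat, Fin.ext_iff] at hir ⊢; omega)]
      simp [Dmat]
  have hCsplit : C.det = (Dmat k s N).det + (Dmat k (Function.update s r (x - k)) N).det := by
    have hfun : (fun j : Fin N => dRow k x (j:ℕ) + dRow k (x-k) (j:ℕ))
        = (fun j : Fin N => dRow k x (j:ℕ)) + (fun j : Fin N => dRow k (x-k) (j:ℕ)) := rfl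
    rw [hC, hfun, Matrix.det_updateRow_add]
    congr 1
    · congr 1
      have h1 : (fun j : Fin N => dRow k x (j:ℕ)) = (Dmat k s N) rhat := rfl
      rw [h1, Matrix.updateRow_eq_self]
    · congr 1
      ext i j
      rw [Matrix.updateRow_apply]
      rcases eq_or_ne i rhat with rfl | hir
      · rw [if_pos rfl]
        simp only [Dmat, Matrix.of_apply]
        rw [Function.update_apply, if_pos rfl]
      · rw [if_neg hir]
        simp only [Dmat, Matrix.of_apply]
        rw [Function.update_apply, if_neg (by simp [hrhat, Fin.ext_iff] at hir ⊢; omega)]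
  have hj2nn : (0:ℤ) ≤ k - x := by omega
  set j2 : Fin N := ⟨(k - x).toNat, hj2N⟩ with hj2def
  have hj2z : ((j2:ℕ):ℤ) = k - x := by
    simp [hj2def, Int.toNat_of_nonneg hj2nn]
  have hCzero : C.det = 0 := by
    rcases lt_or_ge 0 x with hxpos | hxnp
    · -- zero column at j2
      have hndvd : ¬ (k:ℤ) ∣ ((j2:ℕ):ℤ) := by
        rw [hj2z]
        intro hdvd
        have := Int.le_of_dvd (by omega) hdvd
        omega
      have hj2pos : 1 ≤ (j2:ℕ) := by omega
      apply Matrix.det_eq_zero_of_column_eq_zero j2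
      intro i
      rw [hCe]
      rcases eq_or_ne (i:ℕ) r with hir | hir
      · rw [if_pos hir]
        rw [dRow_nonneg _ (by omega), dRow_neg _ (by omega)]
        have e1 : ((k:ℤ) ∣ ((j2:ℕ):ℤ) + x ∧ 1 ≤ (j2:ℕ)) := by
          refine ⟨?_, hj2pos⟩
          rw [hj2z]
          exact ⟨1, by ring⟩
        rw [if_neg hndvd, if_pos e1, if_pos (by rw [hj2z]; ring)]
        ring
      · rw [if_neg hir]
        have hiNv : (i:ℕ) < N := i.isLt
        rcases lt_or_ge (s i) 0 with hsi | hsi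
        · rw [dRow_neg _ hsi, if_neg]
          rw [hj2z]
          intro heq
          exact hne (i:ℕ) hiNv (by omega)
        · rw [dRow_nonneg _ hsi]
          have e2 : ¬ ((k:ℤ) ∣ ((j2:ℕ):ℤ) + s i ∧ 1 ≤ (j2:ℕ)) := by
            rintro ⟨hdvd, -⟩
            rw [hj2z] at hdvd
            have hdvd2 : (k:ℤ) ∣ (s i - x) := by
              have h2 : s i - x = (k - x + s i) - k := by ring
              rw [h2]
              exact dvd_sub hdvd ⟨1, by ring⟩
            have hsik : s i < k := hsk _ hiNv
            have h3 : s i - x = 0 :=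
              Int.eq_zero_of_abs_lt_dvd hdvd2 (by rw [abs_lt]; constructor <;> omega)
            exact hir (huniq _ hiNv (by omega))
          rw [if_neg hndvd, if_neg e2]
          ring
    · -- two equal columns j1 and j2
      have hj1nn : (0:ℤ) ≤ -x := by omega
      have hj1N : (-x).toNat < N := by omega
      set j1 : Fin N := ⟨(-x).toNat, hj1N⟩ with hj1def
      have hj1z : ((j1:ℕ):ℤ) = -x := by
        simp [hj1def, Int.toNat_of_nonneg hj1nn]
      have hne12 : j1 ≠ j2 := by
        simp only [hj1def, hj2def, Fin.ne_iff_vne]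
        omega
      apply Matrix.det_zero_of_column_eq hne12
      intro i
      rw [hCe, hCe]
      rcases eq_or_ne (i:ℕ) r with hir | hir
      · rw [if_pos hir, if_pos hir]
        rcases lt_or_ge x 0 with hx0 | hx0
        · rw [dRow_neg ((j1:ℕ)) hx0, dRow_neg ((j2:ℕ)) hx0,
            dRow_neg ((j1:ℕ)) (by omega : x - (k:ℤ) < 0),
            dRow_neg ((j2:ℕ)) (by omega : x - (k:ℤ) < 0)]
          rw [if_pos (by rw [hj1z]), if_neg (by rw [hj1z]; omega),
            if_neg (by rw [hj2z]; omega), if_pos (by rw [hj2z]; ring)]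
          ring
        · have hx00 : x = 0 := by omega
          have hj10 : (j1:ℕ) = 0 := by omega
          have hj2k : ((j2:ℕ):ℤ) = k := by rw [hj2z, hx00]; ring
          rw [dRow_nonneg ((j1:ℕ)) hx0, dRow_nonneg ((j2:ℕ)) hx0,
            dRow_neg ((j1:ℕ)) (by omega : x - (k:ℤ) < 0),
            dRow_neg ((j2:ℕ)) (by omega : x - (k:ℤ) < 0)]
          have e3 : ¬ ((k:ℤ) ∣ ((j1:ℕ):ℤ) + x ∧ 1 ≤ (j1:ℕ)) := by
            rintro ⟨-, hh⟩; omega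
          have e4 : ((k:ℤ) ∣ ((j2:ℕ):ℤ) + x ∧ 1 ≤ (j2:ℕ)) := by
            constructor
            · rw [hj2k, hx00]; exact ⟨1, by ring⟩
            · omega
          rw [if_pos (by rw [hj1z, hx00]; norm_num),
            if_neg e3,
            if_neg (by rw [hj1z, hx00]; norm_num; omega),
            if_pos (by rw [hj2k]),
            if_pos e4,
            if_pos (by rw [hj2k, hx00]; ring)]
          ring
      · rw [if_neg hir, if_neg hir]
        have hiNv : (i:ℕ) < N := i.isLt
        rcases lt_or_ge (s i) 0 with hsi | hsi
        · rw [dRow_neg ((j1:ℕ)) hsi, dRow_neg ((j2:ℕ)) hsi]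
          rw [if_neg, if_neg]
          · rw [hj2z]
            intro heq
            exact hne (i:ℕ) hiNv (by omega)
          · rw [hj1z]
            intro heq
            exact hir (huniq _ hiNv (by omega))
        · rw [dRow_nonneg ((j1:ℕ)) hsi, dRow_nonneg ((j2:ℕ)) hsi]
          have hsik : s i < k := hsk _ hiNv
          have hdd : ((k:ℤ) ∣ ((j1:ℕ):ℤ)) ↔ ((k:ℤ) ∣ ((j2:ℕ):ℤ)) := by
            rw [hj1z, hj2z]
            constructor
            · intro h
              have h2 := dvd_add h (dvd_refl (k:ℤ))
              have h3 : (-x) + k = k - x := by ring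
              rwa [h3] at h2
            · intro h
              have h2 := dvd_sub h (dvd_refl (k:ℤ))
              have h3 : (k - x) - k = -x := by ring
              rwa [h3] at h2
          have hdd2 : (((k:ℤ) ∣ (((j1:ℕ):ℤ) + s i)) ∧ 1 ≤ (j1:ℕ))
              ↔ (((k:ℤ) ∣ (((j2:ℕ):ℤ) + s i)) ∧ 1 ≤ (j2:ℕ)) := by
            constructor
            · rintro ⟨hh, -⟩
              refine ⟨?_, by omega⟩
              rw [hj2z]
              rw [hj1z] at hh
              have h2 := dvd_add hh (dvd_refl (k:ℤ))
              have h3 : -x + s i + k = k - x + s i := by ring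
              rwa [h3] at h2
            · rintro ⟨hh, hh1⟩
              have hj1pos : 1 ≤ (j1:ℕ) := by
                by_contra hc
                have hx00 : x = 0 := by omega
                rw [hj2z, hx00] at hh
                have h2 := dvd_sub hh (dvd_refl (k:ℤ))
                have h3 : (k:ℤ) - 0 + s i - k = s i := by ring
                rw [h3] at h2
                have h4 : s i = 0 := Int.eq_zero_of_abs_lt_dvd h2 (by rw [abs_lt]; constructor <;> omega)
                exact hir (huniq _ hiNv (by omega))
              refine ⟨?_, hj1pos⟩
              rw [hj1z]
              rw [hj2z] at hh
              have h2 := dvd_sub hh (dvd_refl (k:ℤ))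
              have h3 : k - x + s i - k = -x + s i := by ring
              rwa [h3] at h2
          rw [if_congr hdd rfl rfl, if_congr hdd2 rfl rfl]
  rw [hCsplit] at hCzero
  linarith


section Paths
variable {la mu : Partition}

lemma mem_cells {la mu : Partition} {i j : ℕ} :
    ((i, j) ∈ cells la mu) ↔ (mu.parts i ≤ j ∧ j < la.parts i) := Iff.rfl

lemma adj_row_diff {c d : ℕ × ℕ} (h : Adj c d) : c.1 ≤ d.1 + 1 ∧ d.1 ≤ c.1 + 1 := by
  rcases h with ⟨h1, -⟩ | ⟨-, h2 | h2⟩ <;> omega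

lemma path_row {c d : ℕ × ℕ}
    (h : Relation.ReflTransGen (fun a b => a ∈ cells la mu ∧ b ∈ cells la mu ∧ Adj a b) c d) :
    d ∈ cells la mu → ∀ i, c.1 ≤ i → i ≤ d.1 → ∃ j, (i, j) ∈ cells la mu := by
  induction h with
  | refl =>
    intro hd i h1 h2
    have : i = c.1 := by omega
    subst this
    exact ⟨c.2, hd⟩
  | @tail b d' hab hrel ih =>
    intro hd i h1 h2
    rcases le_or_gt i b.1 with hle | hlt
    · exact ih hrel.1 i h1 hle
    · have hadj := adj_row_diff hrel.2.2
      have : i = d'.1 := by omega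
      subst this
      exact ⟨d'.2, hrel.2.1⟩

lemma path_vert {c d : ℕ × ℕ}
    (h : Relation.ReflTransGen (fun a b => a ∈ cells la mu ∧ b ∈ cells la mu ∧ Adj a b) c d) :
    ∀ i, c.1 ≤ i → i < d.1 → ∃ j, (i, j) ∈ cells la mu ∧ (i+1, j) ∈ cells la mu := by
  induction h with
  | refl => intro i h1 h2; omega
  | @tail b d' hab hrel ih =>
    intro i h1 h2
    rcases lt_or_ge i b.1 with hlt | hle
    · exact ih i h1 hlt
    · have hadj := adj_row_diff hrel.2.2
      have hib : i = b.1 := by omega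
      have hd' : d'.1 = b.1 + 1 := by omega
      subst hib
      rcases hrel.2.2 with ⟨h3, -⟩ | ⟨h3, h4 | h4⟩
      · omega
      · refine ⟨b.2, ?_, ?_⟩
        · simpa using hrel.1
        · have heq : ((b.1 + 1 : ℕ), b.2) = d' := by
            have h5 : b.2 = d'.2 := h3
            apply Prod.ext <;> simp [h4, h5]
          rw [heq]
          exact hrel.2.1
      · omega
end Paths

/-- Structure of a rim hook -/
lemma rimhook_struct {k : ℕ} (hk : 1 ≤ k) {la mu : Partition} (H : IsRimHook la mu k) :
    ∃ r s : ℕ, r ≤ s ∧ s < length la ∧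
      (∀ i, i < r → mu.parts i = la.parts i) ∧
      (∀ i, s < i → mu.parts i = la.parts i) ∧
      (∀ i, r ≤ i → i < s → mu.parts i + 1 = la.parts (i+1)) ∧
      (∀ i, r ≤ i → i ≤ s → mu.parts i < la.parts i) ∧
      ((mu.parts s : ℤ) - s = (la.parts r : ℤ) - r - k) ∧
      height la mu = s - r := by
  obtain ⟨H1, H2, H3, H4⟩ := H
  classical
  set Rfin : Finset ℕ := (Finset.range (length la)).filter (fun i => mu.parts i < la.parts i)
    with hRfin
  have hmemR : ∀ i, i ∈ Rfin ↔ mu.parts i < la.parts i := by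
    intro i
    simp only [hRfin, Finset.mem_filter, Finset.mem_range]
    constructor
    · rintro ⟨-, h⟩; exact h
    · intro h
      exact ⟨lt_length_of_parts_ne_zero la (by omega), h⟩
  have hRne : Rfin.Nonempty := by
    by_contra hc
    rw [Finset.not_nonempty_iff_eq_empty] at hc
    have hzero : ∀ i, la.parts i - mu.parts i = 0 := by
      intro i
      have : i ∉ Rfin := by rw [hc]; exact Finset.notMem_empty i
      rw [hmemR] at this
      omega
    have : (∑ᶠ i, (la.parts i - mu.parts i)) = 0 := by
      have : (fun i => la.parts i - mu.parts i) = fun _ => 0 := funext hzero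
      rw [this]
      exact finsum_zero
    omega
  set r := Rfin.min' hRne with hrdef
  set s := Rfin.max' hRne with hsdef
  have hrR : r ∈ Rfin := Rfin.min'_mem hRne
  have hsR : s ∈ Rfin := Rfin.max'_mem hRne
  have hrs : r ≤ s := Rfin.min'_le _ hsR
  have hsN : s < length la := by
    have := (Finset.mem_filter.mp hsR).1
    simpa using this
  have hrlt : mu.parts r < la.parts r := (hmemR r).mp hrR
  have hslt : mu.parts s < la.parts s := (hmemR s).mp hsR
  have hcr : ((r, mu.parts r) : ℕ × ℕ) ∈ cells la mu := mem_cells.mpr ⟨le_rfl, hrlt⟩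
  have hcs : ((s, mu.parts s) : ℕ × ℕ) ∈ cells la mu := mem_cells.mpr ⟨le_rfl, hslt⟩
  have hpath := H3 _ hcr _ hcs
  -- interval property
  have hint : ∀ i, r ≤ i → i ≤ s → mu.parts i < la.parts i := by
    intro i h1 h2
    obtain ⟨j, hj⟩ := path_row hpath hcs i h1 h2
    rw [mem_cells] at hj
    omega
  -- outside
  have hout : ∀ i, i ∉ Finset.Icc r s → mu.parts i = la.parts i := by
    intro i hi
    by_contra hc
    have h2 : mu.parts i < la.parts i := lt_of_le_of_ne (H1 i) hc
    have h3 : i ∈ Rfin := (hmemR i).mpr h2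
    rw [Finset.mem_Icc] at hi
    push_neg at hi
    rcases le_or_gt r i with h4 | h4
    · exact absurd (Finset.le_max' _ _ h3) (by omega)
    · exact absurd (Rfin.min'_le _ h3) (by omega)
  -- overlap: for r ≤ i < s, mu_i < la_{i+1}
  have hoverlap : ∀ i, r ≤ i → i < s → mu.parts i < la.parts (i+1) := by
    intro i h1 h2
    have hci : ((i, mu.parts i) : ℕ × ℕ) ∈ cells la mu :=
      mem_cells.mpr ⟨le_rfl, hint i h1 (by omega)⟩
    have hci1 : ((i+1, mu.parts (i+1)) : ℕ × ℕ) ∈ cells la mu :=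
      mem_cells.mpr ⟨le_rfl, hint (i+1) (by omega) (by omega)⟩
    obtain ⟨j, hj, hj'⟩ := path_vert (H3 _ hci _ hci1) i le_rfl (by simp)
    rw [mem_cells] at hj hj'
    omega
  -- no 2x2: for r ≤ i < s, la_{i+1} ≤ mu_i + 1
  have hno22 : ∀ i, r ≤ i → i < s → la.parts (i+1) ≤ mu.parts i + 1 := by
    intro i h1 h2
    by_contra hc
    push_neg at hc
    apply H4
    have ha1 := la.antitone (show i ≤ i + 1 by omega)
    have ha2 := mu.antitone (show i ≤ i + 1 by omega)
    refine ⟨i, mu.parts i, ?_, ?_, ?_, ?_⟩ <;> rw [mem_cells] <;> constructor <;> omega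
  have hstep : ∀ i, r ≤ i → i < s → mu.parts i + 1 = la.parts (i+1) := by
    intro i h1 h2
    have := hoverlap i h1 h2
    have := hno22 i h1 h2
    omega
  -- telescoping sum
  have hsupp : (Function.support fun i => la.parts i - mu.parts i) ⊆ ↑(Finset.Icc r s) := by
    intro i hi
    simp only [Function.mem_support] at hi
    by_contra hc
    have := hout i (by simpa using hc)
    omega
  have hsum : (∑ i ∈ Finset.Icc r s, (la.parts i - mu.parts i)) = k := by
    rw [← finsum_eq_sum_of_support_subset _ hsupp]
    exact H2
  have htel : ∀ t, r ≤ t → t ≤ s →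
      (∑ i ∈ Finset.Icc r t, ((la.parts i : ℤ) - mu.parts i))
        = (la.parts r : ℤ) - mu.parts t + (t - r) := by
    intro t h1 h2
    induction t, h1 using Nat.le_induction with
    | base => simp
    | succ t ht ih =>
      rw [Finset.sum_Icc_succ_top (by omega)]
      rw [ih (by omega)]
      have h5 := hstep t ht (by omega)
      push_cast
      push_cast at h5
      omega
  have hcast : (∑ i ∈ Finset.Icc r s, ((la.parts i : ℤ) - mu.parts i)) = (k : ℤ) := by
    rw [← hsum]
    push_cast
    rw [Finset.sum_congr rfl]
    intro i hi
    rw [Finset.mem_Icc] at hi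
    have h6 := H1 i
    push_cast
    omega
  have hbeta : (mu.parts s : ℤ) - s = (la.parts r : ℤ) - r - k := by
    have h7 := htel s hrs le_rfl
    rw [hcast] at h7
    push_cast at h7 ⊢
    omega
  -- height
  have hhe : height la mu = s - r := by
    unfold height
    have hseteq : {i | mu.parts i < la.parts i} = ↑(Finset.Icc r s) := by
      ext i
      simp only [Set.mem_setOf_eq, Finset.coe_Icc, Set.mem_Icc]
      constructor
      · intro h
        have h3 : i ∈ Rfin := (hmemR i).mpr h
        exact ⟨Rfin.min'_le _ h3, Finset.le_max' _ _ h3⟩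
      · intro ⟨h1', h2'⟩
        exact hint i h1' h2'
    rw [hseteq]
    rw [Set.ncard_coe_finset, Nat.card_Icc]
    omega
  exact ⟨r, s, hrs, hsN,
    fun i hi => hout i (by simp [Finset.mem_Icc]; omega),
    fun i hi => hout i (by simp [Finset.mem_Icc]; omega),
    hstep, hint, hbeta, hhe⟩


lemma length_le_of_parts_eq_zero (l : Partition) {i : ℕ} (h : l.parts i = 0) :
    length l ≤ i := Nat.sInf_le h

lemma det_MAs_eq_det_Dmat (k : ℕ) (hk : 1 ≤ k) (s : ℕ → ℤ) (N : ℕ)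
    (hs : ∀ i, i < N → s i < k) :
    (MAs k s N).det = (Dmat k s N).det := by
  have h1 : ((MAs k s N) * (Umat k N)).det = (MAs k s N).det := by
    rw [Matrix.det_mul, det_Umat, mul_one]
  have h2 : ((Pmat k s N) * (Vmat N)).det = (Pmat k s N).det := by
    rw [Matrix.det_mul, det_Vmat, mul_one]
  rw [← h1, MAs_mul_U k hk s N hs, ← h2, Pmat_mul_V k hk s N hs]

/-- The single-step recursion for Petrie determinants. -/
lemma pet_step {k : ℕ} (hk : 1 ≤ k) {la mu : Partition} (hla0 : la.parts 0 < k)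
    (H : IsRimHook la mu k) :
    pet k la = (-1:ℤ) ^ (height la mu + 1) * pet k mu := by
  obtain ⟨r, s, hrs, hsN, hlt, hgt, hmid, hin, hbeta, hht⟩ := rimhook_struct hk H
  set N := length la with hNdef
  have Hmu := H.1
  have hmu0 : mu.parts 0 < k := lt_of_le_of_lt (Hmu 0) hla0
  have hbla : ∀ i, i < N → bseq la i < k := by
    intro i _
    have := la.antitone (Nat.zero_le i)
    unfold bseq
    omega
  have hbmu : ∀ i, i < N → bseq mu i < k := by
    intro i _
    have := mu.antitone (Nat.zero_le i)
    unfold bseq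
    omega
  have hlenmu : length mu ≤ N := by
    apply length_le_of_parts_eq_zero
    have h2 := Hmu N
    have h3 := parts_eq_zero_of_length_le la (le_refl N)
    omega
  have hdla : pet k la = (Dmat k (bseq la) N).det := by
    rw [pet_eq_det, ← hNdef]
    exact det_MAs_eq_det_Dmat k hk (bseq la) N hbla
  have hdmu : pet k mu = (Dmat k (bseq mu) N).det := by
    rw [← det_MAs_eq_pet k hk mu hlenmu]
    exact det_MAs_eq_det_Dmat k hk (bseq mu) N hbmu
  -- relations between beta sequences
  have hmuv : ∀ i, r ≤ i → i < s → bseq mu i = bseq la (i+1) := by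
    intro i hi1 hi2
    have := hmid i hi1 hi2
    unfold bseq
    push_cast
    omega
  have hmus : bseq mu s = bseq la r - k := by
    unfold bseq
    exact hbeta
  have hmueq : ∀ i, i < r ∨ s < i → bseq mu i = bseq la i := by
    intro i hi
    unfold bseq
    rcases hi with hi | hi
    · rw [hlt i hi]
    · rw [hgt i hi]
  -- uniqueness facts
  have huniq : ∀ i, i < N → bseq la i = bseq la r → i = r := by
    intro i _ h
    rcases lt_trichotomy i r with hh | hh | hh
    · exact absurd h (by have := bseq_strictAnti la hh; omega)
    · exact hh
    · exact absurd h (by have := bseq_strictAnti la hh; omega)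
  have hne : ∀ i, i < N → bseq la i ≠ bseq la r - k := by
    intro i _ h
    rcases lt_trichotomy i r with hh | hh | hh
    · have h1 : bseq mu i = bseq la i := hmueq i (Or.inl hh)
      have h2 : bseq mu s > bseq mu i - 1 ∧ bseq mu s < bseq mu i := by
        have := bseq_strictAnti mu (show i < s by omega)
        constructor
        · omega
        · exact this
      omega
    · subst hh
      omega
    · rcases le_or_gt i s with hh2 | hh2
      · have h1 : bseq la i = bseq mu (i-1) := by
          rw [hmuv (i-1) (by omega) (by omega)]
          congr 1
          omega
        have h2 := bseq_strictAnti mu (show i-1 < s by omega)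
        omega
      · have h1 : bseq mu i = bseq la i := hmueq i (Or.inr hh2)
        have h2 := bseq_strictAnti mu (show s < i by omega)
        omega
  have hj2N : ((k:ℤ) - bseq la r).toNat < N := by
    have h1 : (k:ℤ) - bseq la r = (s:ℤ) - mu.parts s := by
      unfold bseq
      omega
    have h2 : ((k:ℤ) - bseq la r).toNat ≤ s := by omega
    omega
  -- the moving-sequence
  set d := s - r with hddef
  have hrds : r + d = s := by omega
  set cs : ℕ → ℕ → ℤ := fun e i =>
    if i < r then bseq la i else if i < r + e then bseq la (i+1)
    else if i = r + e then bseq la r - k else bseq la i with hcsdef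
  have hc0 : cs 0 = Function.update (bseq la) r (bseq la r - k) := by
    funext i
    simp only [hcsdef, Function.update_apply]
    rcases lt_trichotomy i r with hh | hh | hh
    · rw [if_pos hh, if_neg (by omega)]
    · subst hh
      rw [if_neg (by omega), if_neg (by omega), if_pos (by omega), if_pos rfl]
    · rw [if_neg (by omega), if_neg (by omega), if_neg (by omega), if_neg (by omega)]
  have hcd : bseq mu = cs d := by
    funext i
    simp only [hcsdef]
    rcases lt_or_ge i r with hh | hh
    · rw [if_pos hh]
      exact hmueq i (Or.inl hh)
    · rcases lt_or_ge i s with hh2 | hh2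
      · rw [if_neg (by omega), if_pos (by omega)]
        exact hmuv i hh hh2
      · rcases eq_or_lt_of_le hh2 with hh3 | hh3
        · rw [if_neg (by omega), if_neg (by omega), if_pos (by omega), ← hh3]
          exact hmus
        · rw [if_neg (by omega), if_neg (by omega), if_neg (by omega)]
          exact hmueq i (Or.inr hh3)
  have hmove : ∀ e, e ≤ d → (Dmat k (cs e) N).det = (-1:ℤ)^e * (Dmat k (cs 0) N).det := by
    intro e
    induction e with
    | zero => intro _; simp
    | succ e ih =>
      intro he
      have hswap := det_Dmat_swap k (cs e) (cs (e+1)) N (r+e) (by omega)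
        (by simp only [hcsdef]
            split_ifs <;> omega)
        (by simp only [hcsdef]
            split_ifs <;> omega)
        (by intro i hi1 hi2
            simp only [hcsdef]
            split_ifs <;> first | rfl | omega)
      rw [hswap, ih (by omega)]
      ring
  have hupd : (Dmat k (cs 0) N).det = - (Dmat k (bseq la) N).det := by
    rw [hc0]
    exact det_Dmat_update k hk (bseq la) N r (by omega) hbla huniq hne hj2N
  -- put it together
  have hfinal : pet k mu = (-1:ℤ)^(d+1) * pet k la := by
    rw [hdmu, hcd, hmove d le_rfl, hupd, hdla]
    ring
  have hpow : (-1:ℤ)^(d+1) * ((-1:ℤ)^(d+1)) = 1 := by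
    rw [← pow_add]
    exact Even.neg_one_pow ⟨d+1, by ring⟩
  rw [hht, hfinal, ← mul_assoc, hpow, one_mul]

lemma det_ones_aux : ∀ (n : ℕ), n ≤ 1 → ∀ (M : Matrix (Fin n) (Fin n) ℤ),
    (∀ i j, M i j = 1) → M.det = 1
  | 0, _, M, _ => by simp
  | 1, _, M, h => by rw [Matrix.det_fin_one, h]

lemma pet_short {k : ℕ} (hk : 1 ≤ k) {c : Partition} (hlen : length c ≤ 1)
    (h0 : c.parts 0 < k) : pet k c = 1 := by
  unfold pet
  apply det_ones_aux (length c) hlen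
  intro i j
  simp only [Matrix.of_apply]
  have hi : (i:ℕ) = 0 := by have := i.isLt; omega
  have hj : (j:ℕ) = 0 := by have := j.isLt; omega
  rw [if_pos]
  rw [hi, hj]
  constructor <;> push_cast <;> omega

end Proofs

/-- if `λ ⊢ m`, `λ_1 < k`, the `k`-core of `λ` has at most one
part, and `core_k(λ) = λ⁰ ⊂ λ¹ ⊂ ⋯ ⊂ λ^q = λ` (`q = ⌊m/k⌋`) is any chain in
which each `λ^j/λ^{j-1}` is a rim hook of size `k`, then
`pet_k(λ) = Π_{j=1}^q (-1)^{ht(λ^j/λ^{j-1})+1}`. -/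
theorem pet_eq_prod_heights (k m : ℕ) (hk : 1 ≤ k) (l : Partition)
    (hm : psize l = m) (h1 : l.parts 0 < k)
    (c : Partition) (hc : IsCore k l c) (hlen : length c ≤ 1)
    (f : ℕ → Partition) (hf0 : f 0 = c) (hfq : f (m / k) = l)
    (hstep : ∀ j, j < m / k → IsRimHook (f (j+1)) (f j) k) :
    pet k l = ∏ j ∈ Finset.range (m / k), (-1 : ℤ) ^ (height (f (j+1)) (f j) + 1) := by
  have haux : ∀ dd jj, jj + dd = m / k → ∀ i, (f jj).parts i ≤ l.parts i := by
    intro dd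
    induction dd with
    | zero =>
      intro jj hjj i
      rw [show jj = m / k from by omega, hfq]
    | succ dd ih =>
      intro jj hjj i
      have hrh := hstep jj (by omega)
      exact le_trans (hrh.1 i) (ih (jj+1) (by omega) i)
  have hmain : ∀ jj, jj ≤ m / k →
      pet k (f jj) = ∏ i ∈ Finset.range jj, (-1:ℤ)^(height (f (i+1)) (f i) + 1) := by
    intro jj
    induction jj with
    | zero =>
      intro _
      rw [Finset.range_zero, Finset.prod_empty]
      have hc0 : (f 0).parts 0 < k := lt_of_le_of_lt (haux (m/k) 0 (by omega) 0) h1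
      rw [hf0] at hc0 ⊢
      exact pet_short hk hlen hc0
    | succ jj ih =>
      intro hjj
      have hfj0 : (f (jj+1)).parts 0 < k :=
        lt_of_le_of_lt (haux (m/k - (jj+1)) (jj+1) (by omega) 0) h1
      rw [pet_step hk hfj0 (hstep jj (by omega)), ih (by omega), Finset.prod_range_succ]
      ring
  have hfin := hmain (m/k) le_rfl
  rw [hfq] at hfin
  exact hfin

end Petrie
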